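/- (Uniqueness via convexity and countable range.) Let $\mathcal{U}$ be a convex set of measurable functions $u:[0,T]\to[-1,1]$ and $J:\mathcal{U}\to\mathbb{R}$ convex. Suppose $u_1,u_2$ are both minimizers of $J$ over $\mathcal{U}$, and suppose every minimizer $u$ satisfies $u(t)\in\mathbb{U}$ for a.e. $t$, where $\mathbb{U}\subset\mathbb{R}$ is a finite set. Then $u_1=u_2$ almost everywhere. -/

import Mathlib

open MeasureTheory

/-- uniqueness of the minimizer via convexity and finite range: if `𝒰` is a
convex family of measurable controls `[0,T] → [-1,1]`, `J` is convex on `𝒰`, `u₁, u₂` are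
minimizers of `J` over `𝒰`, and every minimizer takes values a.e. in a finite set `𝕌`, then
`u₁ = u₂` a.e. on `[0,T]`. -/
theorem stmt_14 (T : ℝ) (hT : 0 < T)
    (𝒰 : Set (ℝ → ℝ))
    (h𝒰meas : ∀ u ∈ 𝒰, Measurable u)
    (h𝒰bdd : ∀ u ∈ 𝒰, ∀ t ∈ Set.Icc (0 : ℝ) T, u t ∈ Set.Icc (-1 : ℝ) 1)
    (h𝒰conv : ∀ u ∈ 𝒰, ∀ v ∈ 𝒰, ∀ lam ∈ Set.Icc (0 : ℝ) 1,
      (fun t => lam * u t + (1 - lam) * v t) ∈ 𝒰)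
    (J : (ℝ → ℝ) → ℝ)
    (hJconv : ∀ u ∈ 𝒰, ∀ v ∈ 𝒰, ∀ lam ∈ Set.Icc (0 : ℝ) 1,
      J (fun t => lam * u t + (1 - lam) * v t) ≤ lam * J u + (1 - lam) * J v)
    (𝕌 : Set ℝ) (h𝕌 : 𝕌.Finite)
    (hdisc : ∀ u ∈ 𝒰, (∀ v ∈ 𝒰, J u ≤ J v) →
      ∀ᵐ t ∂(volume.restrict (Set.Icc (0 : ℝ) T)), u t ∈ 𝕌)
    (u₁ : ℝ → ℝ) (hu₁ : u₁ ∈ 𝒰) (hmin₁ : ∀ v ∈ 𝒰, J u₁ ≤ J v)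
    (u₂ : ℝ → ℝ) (hu₂ : u₂ ∈ 𝒰) (hmin₂ : ∀ v ∈ 𝒰, J u₂ ≤ J v) :
    u₁ =ᵐ[volume.restrict (Set.Icc (0 : ℝ) T)] u₂ := by

  set n := h𝕌.toFinset.card with hn
  set f : Fin (n+1) → ℝ := fun i => 1 / ((i : ℕ) + 2) with hf
  have hfmem : ∀ i, f i ∈ Set.Icc (0:ℝ) 1 := by
    intro i
    constructor
    · positivity
    · rw [div_le_one (by positivity)]
      have : (1:ℝ) ≤ (i:ℕ) + 2 := by
        have : (0:ℝ) ≤ ((i:ℕ):ℝ) := Nat.cast_nonneg _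
        linarith
      linarith
  have hfinj : Function.Injective f := by
    intro i j hij
    simp only [hf, one_div, inv_inj, add_left_inj] at hij
    replace hij := hij.symm
    exact Fin.ext (Nat.cast_injective hij.symm)
  have hJeq : J u₁ = J u₂ := le_antisymm (hmin₁ u₂ hu₂) (hmin₂ u₁ hu₁)
  have hmid : ∀ i : Fin (n+1),
      ∀ᵐ t ∂(volume.restrict (Set.Icc (0 : ℝ) T)),
        f i * u₁ t + (1 - f i) * u₂ t ∈ 𝕌 := by
    intro i
    have hmem : (fun t => f i * u₁ t + (1 - f i) * u₂ t) ∈ 𝒰 :=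
      h𝒰conv u₁ hu₁ u₂ hu₂ (f i) (hfmem i)
    have hle : J (fun t => f i * u₁ t + (1 - f i) * u₂ t) ≤ J u₁ := by
      have := hJconv u₁ hu₁ u₂ hu₂ (f i) (hfmem i)
      rw [← hJeq] at this
      linarith [this]
    have hminmid : ∀ v ∈ 𝒰, J (fun t => f i * u₁ t + (1 - f i) * u₂ t) ≤ J v :=
      fun v hv => le_trans hle (hmin₁ v hv)
    exact hdisc _ hmem hminmid
  have hall : ∀ᵐ t ∂(volume.restrict (Set.Icc (0 : ℝ) T)),
      ∀ i : Fin (n+1), f i * u₁ t + (1 - f i) * u₂ t ∈ 𝕌 :=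
    ae_all_iff.mpr hmid
  filter_upwards [hall] with t ht
  by_contra hne
  have hsub : u₁ t - u₂ t ≠ 0 := sub_ne_zero.mpr hne
  set g : Fin (n+1) → ℝ := fun i => f i * u₁ t + (1 - f i) * u₂ t with hg
  have hginj : Function.Injective g := by
    intro i j hij
    apply hfinj
    have : f i * (u₁ t - u₂ t) = f j * (u₁ t - u₂ t) := by
      simp only [hg] at hij; ring_nf; ring_nf at hij; linarith
    exact mul_right_cancel₀ hsub this
  have hcard : (Finset.univ : Finset (Fin (n+1))).card ≤ h𝕌.toFinset.card := by
    apply Finset.card_le_card_of_injOn g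
    · intro i _
      simpa using ht i
    · exact fun a _ b _ h => hginj h
  simp only [Finset.card_univ, Fintype.card_fin] at hcard
  omega
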